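/- The BB84 family of bipartite correlations P(ab|xy) = (1 + (-1)^{a⊕b⊕xy} δ_{x,y} W)/4 with 0 < W ≤ 1 admits, when W ≤ 1/2, a local-hidden-state decomposition P(ab|xy) = Σ_λ q_λ P(a|x,ρ_A^λ)P(b|y,ρ_B^λ) where A₀=σₓ, A₁=σ_y on Alice's side, B₀,B₁ are the fixed measurements (σₓ∓σ_y)/√2 on Bob's side, and ρ_A^λ, ρ_B^λ are single-qubit states. Equivalently, for W ≤ 1/2 the BB84 family can be reproduced by a separable two-qubit state under these measurements. -/

import Mathlib

open Matrix ComplexOrder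

noncomputable def σx : Matrix (Fin 2) (Fin 2) ℂ := !![0, 1; 1, 0]
noncomputable def σy : Matrix (Fin 2) (Fin 2) ℂ := !![0, -Complex.I; Complex.I, 0]

/-- Alice's observables: A₀ = σₓ, A₁ = σ_y. -/
noncomputable def Aobs : Fin 2 → Matrix (Fin 2) (Fin 2) ℂ := fun x => if x = 0 then σx else σy

/-- Bob's observables: B₀ = (σₓ − σ_y)/√2, B₁ = (σₓ + σ_y)/√2. -/
noncomputable def Bobs : Fin 2 → Matrix (Fin 2) (Fin 2) ℂ := fun y =>
  if y = 0 then (Real.sqrt 2 : ℂ)⁻¹ • (σx - σy) else (Real.sqrt 2 : ℂ)⁻¹ • (σx + σy)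

/-- The projector onto the `(-1)^a` eigenspace of a ±1-valued observable `O`. -/
noncomputable def proj (O : Matrix (Fin 2) (Fin 2) ℂ) (a : Fin 2) : Matrix (Fin 2) (Fin 2) ℂ :=
  (2 : ℂ)⁻¹ • (1 + ((-1 : ℂ) ^ (a : ℕ)) • O)

/-- The probability of outcome `a` when measuring observable `O` on qubit state `ρ`. -/
noncomputable def probOf (O : Matrix (Fin 2) (Fin 2) ℂ) (a : Fin 2)
    (ρ : Matrix (Fin 2) (Fin 2) ℂ) : ℝ := ((proj O a * ρ).trace).re

/-- The BB84 family of bipartite correlations. -/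
noncomputable def bbP (W : ℝ) (a b x y : Fin 2) : ℝ :=
  (1 + (-1 : ℝ) ^ ((a + b + x * y : Fin 2) : ℕ) * (if x = y then W else 0)) / 4

/-- A qubit state in the equatorial plane of the Bloch ball. -/
noncomputable def bloch (u v : ℝ) : Matrix (Fin 2) (Fin 2) ℂ :=
  !![1/2, ((u:ℂ) - v*Complex.I)/2; ((u:ℂ) + v*Complex.I)/2, 1/2]

lemma bloch_trace (u v : ℝ) : (bloch u v).trace = 1 := by
  simp [bloch, Matrix.trace_fin_two]; norm_num

lemma bloch_psd (u v : ℝ) (h : u^2 + v^2 ≤ 1) : (bloch u v).PosSemidef := by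
  rw [Matrix.posSemidef_iff_dotProduct_mulVec]
  constructor
  · ext i j
    fin_cases i <;> fin_cases j <;>
      simp [bloch, Matrix.conjTranspose_apply, Complex.ext_iff]
  · intro x
    rw [Complex.le_def]
    have e1 : (star x ⬝ᵥ (bloch u v) *ᵥ x) =
        (starRingEnd ℂ) (x 0) * ((1/2) * x 0 + ((u:ℂ) - v*Complex.I)/2 * x 1)
        + (starRingEnd ℂ) (x 1) * (((u:ℂ) + v*Complex.I)/2 * x 0 + (1/2) * x 1) := by
      simp [bloch, dotProduct, mulVec, Fin.sum_univ_two]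
    rw [e1]
    constructor
    · simp only [Complex.add_re, Complex.mul_re, Complex.mul_im, Complex.add_im,
        Complex.div_re, Complex.div_im, Complex.sub_re, Complex.sub_im,
        Complex.ofReal_re, Complex.ofReal_im, Complex.I_re, Complex.I_im,
        Complex.conj_re, Complex.conj_im, Complex.one_re, Complex.one_im,
        Complex.normSq, Complex.zero_re, MonoidWithZeroHom.coe_mk, ZeroHom.coe_mk,
        Complex.re_ofNat, Complex.im_ofNat]
      norm_num
      nlinarith [sq_nonneg ((x 0).re + (u*(x 1).re + v*(x 1).im)),
        sq_nonneg ((x 0).im + (u*(x 1).im - v*(x 1).re)),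
        sq_nonneg (x 1).re, sq_nonneg (x 1).im,
        mul_nonneg (mul_nonneg (sq_nonneg (x 1).re) (sq_nonneg (x 1).im)) (sq_nonneg u),
        mul_nonneg (add_nonneg (sq_nonneg (x 1).re) (sq_nonneg (x 1).im))
          (sub_nonneg.2 h)]
    · simp only [Complex.add_im, Complex.mul_re, Complex.mul_im,
        Complex.div_re, Complex.div_im, Complex.sub_re, Complex.sub_im,
        Complex.ofReal_re, Complex.ofReal_im, Complex.I_re, Complex.I_im,
        Complex.conj_re, Complex.conj_im, Complex.one_re, Complex.one_im, Complex.add_re,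
        Complex.normSq, Complex.zero_im, MonoidWithZeroHom.coe_mk, ZeroHom.coe_mk,
        Complex.re_ofNat, Complex.im_ofNat]
      ring

lemma probA (x a : Fin 2) (u v : ℝ) :
    probOf (Aobs x) a (bloch u v) = (1 + (-1:ℝ)^(a:ℕ) * (if x = 0 then u else v))/2 := by
  fin_cases x <;> fin_cases a <;>
    simp [probOf, proj, Aobs, σx, σy, bloch, Matrix.trace_fin_two, Matrix.mul_apply,
      Fin.sum_univ_two, Matrix.one_apply, Complex.add_re, Complex.mul_re, Complex.mul_im,
      Complex.div_re, Complex.div_im, Complex.normSq] <;> ring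

lemma probB (y a : Fin 2) (u v : ℝ) :
    probOf (Bobs y) a (bloch u v) =
      (1 + (-1:ℝ)^(a:ℕ) * (Real.sqrt 2)⁻¹ * (if y = 0 then u - v else u + v))/2 := by
  have hne : Real.sqrt 2 ≠ 0 := by positivity
  fin_cases y <;> fin_cases a <;>
    (simp [probOf, proj, Bobs, σx, σy, bloch, Matrix.trace_fin_two, Matrix.mul_apply,
      Fin.sum_univ_two, Matrix.one_apply, Matrix.smul_apply, Complex.add_re, Complex.mul_re,
      Complex.mul_im, Complex.div_re, Complex.div_im, Complex.normSq, Complex.inv_re,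
      Complex.inv_im, Complex.ofReal_re, Complex.ofReal_im]
     <;> (field_simp; ring_nf; rw [Real.sq_sqrt (by norm_num : (0:ℝ) ≤ 2)]; ring))

noncomputable def sv : Fin 4 → ℝ := ![1, 1, -1, -1]
noncomputable def tv : Fin 4 → ℝ := ![1, -1, 1, -1]

lemma sv_sq (l : Fin 4) : sv l ^ 2 = 1 := by fin_cases l <;> norm_num [sv]
lemma tv_sq (l : Fin 4) : tv l ^ 2 = 1 := by fin_cases l <;> norm_num [tv]

lemma fin2cases (z : Fin 2) : z = 0 ∨ z = 1 := by omega

set_option maxHeartbeats 2000000 in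
lemma keysum (W : ℝ) (a b x y : Fin 2) :
    bbP W a b x y = ∑ l : Fin 4, (1/4 : ℝ) *
      ((1 + (-1:ℝ)^(a:ℕ) * (if x = 0 then sv l / Real.sqrt 2 else tv l / Real.sqrt 2))/2) *
      ((1 + (-1:ℝ)^(b:ℕ) * (Real.sqrt 2)⁻¹ * (if y = 0 then 2*W*sv l else -(2*W*tv l)))/2) := by
  have hne : Real.sqrt 2 ≠ 0 := by positivity
  rw [Fin.sum_univ_four]
  rcases fin2cases a with rfl | rfl <;> rcases fin2cases b with rfl | rfl <;>
    rcases fin2cases x with rfl | rfl <;> rcases fin2cases y with rfl | rfl <;>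
    (norm_num [bbP,
       show ((2:Fin 2):ℕ) = 0 from rfl, show ((3:Fin 2):ℕ) = 1 from rfl,
       show ((1+1:Fin 2):ℕ) = 0 from rfl, show ((1+1+1:Fin 2):ℕ) = 1 from rfl,
       show sv 2 = -1 from rfl, show sv 3 = -1 from rfl, show tv 2 = 1 from rfl,
       show tv 3 = -1 from rfl, show sv 0 = 1 from rfl, show sv 1 = 1 from rfl,
       show tv 0 = 1 from rfl, show tv 1 = -1 from rfl] <;>
     (field_simp <;> ring_nf <;>
      rw [Real.sq_sqrt (by norm_num : (0:ℝ) ≤ 2)] <;> ring))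

theorem stmt16 (W : ℝ) (h0 : 0 < W) (h1 : W ≤ 1 / 2) :
    ∃ (n : ℕ) (q : Fin n → ℝ) (ρA ρB : Fin n → Matrix (Fin 2) (Fin 2) ℂ),
      (∀ l, 0 ≤ q l) ∧ (∑ l, q l = 1) ∧
      (∀ l, (ρA l).PosSemidef ∧ (ρA l).trace = 1) ∧
      (∀ l, (ρB l).PosSemidef ∧ (ρB l).trace = 1) ∧
      (∀ a b x y : Fin 2,
        bbP W a b x y = ∑ l, q l * probOf (Aobs x) a (ρA l) * probOf (Bobs y) b (ρB l)) := by
  have hne : Real.sqrt 2 ≠ 0 := by positivity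
  refine ⟨4, fun _ => 1/4,
    fun l => bloch (sv l / Real.sqrt 2) (tv l / Real.sqrt 2),
    fun l => bloch (W * (sv l - tv l)) (-W * (sv l + tv l)),
    fun _ => by norm_num, by norm_num [Fin.sum_univ_four], ?_, ?_, ?_⟩
  · intro l
    refine ⟨bloch_psd _ _ ?_, bloch_trace _ _⟩
    rw [div_pow, div_pow, Real.sq_sqrt (by norm_num : (0:ℝ) ≤ 2), sv_sq, tv_sq]
    norm_num
  · intro l
    refine ⟨bloch_psd _ _ ?_, bloch_trace _ _⟩
    have hs := sv_sq l
    have ht := tv_sq l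
    nlinarith [sq_nonneg (sv l + tv l), sq_nonneg (sv l - tv l), sq_nonneg W,
      mul_pos h0 h0, sq_nonneg (sv l * tv l)]
  · intro a b x y
    have e1 : ∀ l : Fin 4, W * (sv l - tv l) - (-W * (sv l + tv l)) = 2 * W * sv l :=
      fun l => by ring
    have e2 : ∀ l : Fin 4, W * (sv l - tv l) + (-W * (sv l + tv l)) = -(2 * W * tv l) :=
      fun l => by ring
    simp only [probA, probB, e1, e2]
    exact keysum W a b x y
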